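/- Let D be a balanced bipartite digraph with colour classes X and Y of cardinality a ≥ 2 satisfying condition (M). Suppose D contains a complete matching M from X to Y and D contains no oriented cycle of length 2a. Then for every pair of distinct vertices u, v of D, there is an oriented path from u to v compatible with M. -/

import Mathlib

namespace BipDigraph

variable {V : Type}

/-- Out-degree of `v` in the digraph `(V, A)`. -/
noncomputable def outdeg (A : V → V → Prop) (v : V) : ℕ := Nat.card {w : V // A v w}

/-- In-degree of `v` in the digraph `(V, A)`. -/
noncomputable def indeg (A : V → V → Prop) (v : V) : ℕ := Nat.card {w : V // A w v}

/-- Degree of `v`: out-degree plus in-degree. -/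
noncomputable def deg (A : V → V → Prop) (v : V) : ℕ := outdeg A v + indeg A v

/-- Out-degree of `v` relative to the vertex set `S`. -/
noncomputable def outdegIn (A : V → V → Prop) (S : Set V) (v : V) : ℕ := Nat.card {w : V // w ∈ S ∧ A v w}

/-- In-degree of `v` relative to the vertex set `S`. -/
noncomputable def indegIn (A : V → V → Prop) (S : Set V) (v : V) : ℕ := Nat.card {w : V // w ∈ S ∧ A w v}

/-- Degree of `v` relative to the vertex set `S`. -/
noncomputable def degIn (A : V → V → Prop) (S : Set V) (v : V) : ℕ := outdegIn A S v + indegIn A S v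

/-- The arc `(u,v)` belongs to the matching given by the function `M` on the class `X`. -/
def InM (X : Finset V) (M : V → V) (u v : V) : Prop := u ∈ X ∧ M u = v

/-- The arc `(u,v)` is an arc of the digraph not belonging to the matching. -/
def NotM (A : V → V → Prop) (X : Finset V) (M : V → V) (u v : V) : Prop :=
  A u v ∧ ¬ InM X M u v

/-- `M` is a complete matching from `X` to `Y`: every `x ∈ X` is matched along an arc
to a vertex of `Y`, and the matching arcs are independent. -/
def CompleteMatching (A : V → V → Prop) (X Y : Finset V) (M : V → V) : Prop :=
  (∀ x ∈ X, M x ∈ Y ∧ A x (M x)) ∧ Set.InjOn M X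

/-- Consecutive arcs of the list alternately satisfy `P` and `Q`, starting with `P`. -/
def Alt (P Q : V → V → Prop) : List V → Prop
  | [] => True
  | [_] => True
  | a :: b :: t => P a b ∧ Alt Q P (b :: t)

/-- `p` is an oriented path in `(V, A)` whose arcs are alternately in the matching `M`
(on `X`) and outside of it. -/
def IsCompatPath (A : V → V → Prop) (X : Finset V) (M : V → V) (p : List V) : Prop :=
  p ≠ [] ∧ p.Nodup ∧ p.Chain' A ∧
    (Alt (InM X M) (NotM A X M) p ∨ Alt (NotM A X M) (InM X M) p)

/-- An `M`-compatible oriented path from `u` to `v`. -/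
def IsCompatPathFromTo (A : V → V → Prop) (X : Finset V) (M : V → V)
    (p : List V) (u v : V) : Prop :=
  IsCompatPath A X M p ∧ p.head? = some u ∧ p.getLast? = some v

/-- `p` lists the vertices of an oriented cycle of `(V, A)` in cyclic order;
its length (number of arcs = number of vertices) is `p.length`. -/
def IsCycle (A : V → V → Prop) (p : List V) : Prop :=
  2 ≤ p.length ∧ p.Nodup ∧ ∃ u, p.head? = some u ∧ List.Chain' A (p ++ [u])

/-- `p` is an oriented cycle whose arcs are alternately in the matching `M` (on `X`)
and outside of it. -/
def IsCompatCycle (A : V → V → Prop) (X : Finset V) (M : V → V) (p : List V) : Prop :=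
  2 ≤ p.length ∧ p.Nodup ∧ ∃ u, p.head? = some u ∧ List.Chain' A (p ++ [u]) ∧
    (Alt (InM X M) (NotM A X M) (p ++ [u]) ∨ Alt (NotM A X M) (InM X M) (p ++ [u]))

/-- The digraph `(V, A)` contains an oriented cycle of length `n`. -/
def HasCycleOfLength (A : V → V → Prop) (n : ℕ) : Prop :=
  ∃ p : List V, IsCycle A p ∧ p.length = n

/-- `(V, A)` is a balanced bipartite digraph with colour classes `X`, `Y` of cardinality `a`. -/
def BalancedBipartite (A : V → V → Prop) (X Y : Finset V) (a : ℕ) : Prop :=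
  X.card = a ∧ Y.card = a ∧ Disjoint X Y ∧ (∀ v : V, v ∈ X ∨ v ∈ Y) ∧
    ∀ u v : V, A u v → (u ∈ X ∧ v ∈ Y) ∨ (u ∈ Y ∧ v ∈ X)

/-- Condition (M): `d(u) + d(v) ≥ 3a + 1` for every pair of distinct vertices `u, v`
with no arc between them in either direction. -/
def CondM (A : V → V → Prop) (a : ℕ) : Prop :=
  ∀ u v : V, u ≠ v → ¬ A u v → ¬ A v u → 3 * a + 1 ≤ deg A u + deg A v

/-- Condition (A): `d(x') + d(y') + d(x'') + d(y'') ≥ 6a + 2` for all pairwise distinct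
`x', x'' ∈ X`, `y', y'' ∈ Y` joined by `M`-compatible paths from `x'` to `y'` and from
`x''` to `y''`. -/
def CondA (A : V → V → Prop) (X Y : Finset V) (M : V → V) (a : ℕ) : Prop :=
  ∀ x' x'' y' y'' : V, x' ∈ X → x'' ∈ X → y' ∈ Y → y'' ∈ Y → x' ≠ x'' → y' ≠ y'' →
    (∃ p, IsCompatPathFromTo A X M p x' y') → (∃ p, IsCompatPathFromTo A X M p x'' y'') →
    6 * a + 2 ≤ deg A x' + deg A y' + deg A x'' + deg A y''

/-- An `M`-compatible cycle all of whose vertices lie in `S`. -/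
def IsCompatCycleIn (A : V → V → Prop) (X : Finset V) (M : V → V) (S : Set V)
    (p : List V) : Prop :=
  IsCompatCycle A X M p ∧ ∀ v ∈ p, v ∈ S

/-- An `M`-compatible path from `u` to `v` all of whose vertices lie in `S`. -/
def IsCompatPathFromToIn (A : V → V → Prop) (X : Finset V) (M : V → V) (S : Set V)
    (p : List V) (u v : V) : Prop :=
  IsCompatPathFromTo A X M p u v ∧ ∀ w ∈ p, w ∈ S

/-- The digraph `(V, A)` is strongly connected. -/
def StronglyConnected (A : V → V → Prop) : Prop :=
  ∀ u v : V, u ≠ v →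
    ∃ p : List V, p.Chain' A ∧ p.head? = some u ∧ p.getLast? = some v

section Aux

lemma chain'_append_singleton {R : V → V → Prop} {l : List V} {b c : V}
    (h : l.Chain' R) (hb : l.getLast? = some b) (hbc : R b c) :
    (l ++ [c]).Chain' R := by
  unfold List.Chain'; rw [List.isChain_append]
  refine ⟨h, List.isChain_singleton _, ?_⟩
  intro x hx y hy
  rw [hb] at hx
  simp only [Option.mem_def, Option.some.injEq, List.head?] at hx hy
  subst hx; subst hy; exact hbc

lemma getLast?_cons_of_ne_nil {a : V} {l : List V} (h : l ≠ []) :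
    (a :: l).getLast? = l.getLast? := by
  cases l with
  | nil => exact absurd rfl h
  | cons b t => exact List.getLast?_cons_cons

/-- truncate a nodup chain at an element -/
lemma exists_prefix_chain {R : V → V → Prop} :
    ∀ (p : List V), p.Chain' R → p.Nodup → ∀ v ∈ p,
      ∃ q : List V, q.Chain' R ∧ q.Nodup ∧ q.head? = p.head? ∧ q.getLast? = some v ∧
        ∀ z ∈ q, z ∈ p := by
  intro p
  induction p with
  | nil => intro _ _ v hv; exact absurd hv List.not_mem_nil
  | cons a p ih =>
    intro hc hnd v hv
    by_cases hva : v = a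
    · subst hva
      exact ⟨[v], List.isChain_singleton v, List.nodup_singleton v, rfl, rfl, by
        intro z hz; simp at hz; simp [hz]⟩
    · have hvp : v ∈ p := by
        rcases List.mem_cons.mp hv with h | h
        · exact absurd h hva
        · exact h
      obtain ⟨q, hqc, hqnd, hqh, hql, hqm⟩ := ih hc.tail (List.Nodup.of_cons hnd) v hvp
      have hpne : p ≠ [] := by intro h; rw [h] at hvp; exact List.not_mem_nil hvp
      have hqne : q ≠ [] := by
        intro h; rw [h] at hql; exact (Option.some_ne_none v hql.symm).elim
      refine ⟨a :: q, ?_, ?_, ?_, ?_, ?_⟩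
      · unfold List.Chain'; rw [List.isChain_cons]
        refine ⟨?_, hqc⟩
        intro y hy
        rw [hqh] at hy
        have := (List.isChain_cons.mp hc).1
        exact this y hy
      · refine List.nodup_cons.mpr ⟨?_, hqnd⟩
        intro haq
        exact (List.nodup_cons.mp hnd).1 (by
          have := hqm a haq
          exact this)
      · rfl
      · rw [getLast?_cons_of_ne_nil hqne]; exact hql
      · intro z hz
        rcases List.mem_cons.mp hz with h | h
        · simp [h]
        · exact List.mem_cons_of_mem _ (hqm z h)

lemma exists_nodup_chain_of_rtg {R : V → V → Prop} {x v : V}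
    (h : Relation.ReflTransGen R x v) :
    ∃ p : List V, p.Chain' R ∧ p.Nodup ∧ p.head? = some x ∧ p.getLast? = some v ∧
      ∀ z ∈ p, Relation.ReflTransGen R x z := by
  induction h with
  | refl =>
    exact ⟨[x], List.isChain_singleton x, List.nodup_singleton x, rfl, rfl, by
      intro z hz; simp at hz; subst hz; exact Relation.ReflTransGen.refl⟩
  | @tail b c hab hbc ih =>
    obtain ⟨p, hc, hnd, hh, hl, hm⟩ := ih
    by_cases hcp : c ∈ p
    · obtain ⟨q, hqc, hqnd, hqh, hql, hqm⟩ := exists_prefix_chain p hc hnd c hcp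
      exact ⟨q, hqc, hqnd, hqh.trans hh, hql, fun z hz => hm z (hqm z hz)⟩
    · have hpne : p ≠ [] := by
        intro h; rw [h] at hh; exact (Option.some_ne_none x hh.symm).elim
      refine ⟨p ++ [c], chain'_append_singleton hc hl hbc, ?_, ?_, ?_, ?_⟩
      · simp [List.nodup_append, hnd, hcp]
        exact fun a ha h => hcp (h ▸ ha)
      · rw [List.head?_append_of_ne_nil _ hpne]; exact hh
      · simp
      · intro z hz
        rcases List.mem_append.mp hz with h | h
        · exact hm z h
        · simp at h; subst h
          exact Relation.ReflTransGen.tail hab hbc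

lemma rtg_prop {R : V → V → Prop} {P : V → Prop} {x z : V}
    (h : ∀ p q, R p q → P q) (hx : P x) (hr : Relation.ReflTransGen R x z) : P z := by
  induction hr with
  | refl => exact hx
  | tail _ hstep _ => exact h _ _ hstep

/-- interleave a list of X-vertices with their matched partners, then append `t` -/
def glue (M : V → V) : List V → List V → List V
  | [], t => t
  | x :: xs, t => x :: M x :: glue M xs t

lemma alt_cons_cons {P Q : V → V → Prop} {a b : V} {t : List V} :
    Alt P Q (a :: b :: t) ↔ P a b ∧ Alt Q P (b :: t) := Iff.rfl

lemma alt_single {P Q : V → V → Prop} {a : V} : Alt P Q [a] := trivial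

lemma mem_glue {M : V → V} : ∀ {xs t : List V} {z : V}, z ∈ glue M xs t →
    z ∈ xs ∨ (∃ x ∈ xs, z = M x) ∨ z ∈ t := by
  intro xs
  induction xs with
  | nil => intro t z h; exact Or.inr (Or.inr h)
  | cons x xs ih =>
    intro t z h
    rcases List.mem_cons.mp h with h1 | h1
    · exact Or.inl (by simp [h1])
    · rcases List.mem_cons.mp h1 with h2 | h2
      · exact Or.inr (Or.inl ⟨x, by simp, h2⟩)
      · rcases ih h2 with h3 | h3 | h3
        · exact Or.inl (List.mem_cons_of_mem _ h3)
        · obtain ⟨x', hx', hz⟩ := h3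
          exact Or.inr (Or.inl ⟨x', List.mem_cons_of_mem _ hx', hz⟩)
        · exact Or.inr (Or.inr h3)

lemma glue_spec {A : V → V → Prop} {X Y : Finset V} {M : V → V}
    (hXY : Disjoint X Y) (hMmem : ∀ x ∈ X, M x ∈ Y)
    (hMarc : ∀ x ∈ X, A x (M x)) (hMinj : Set.InjOn M X) :
    ∀ (xs t : List V), xs ≠ [] → (∀ x ∈ xs, x ∈ X) → (xs ++ t).Nodup →
      (t = [] ∨ ∃ w, t = [w] ∧ w ∈ X) →
      (xs ++ t).Chain' (fun p q => A (M p) q) →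
      (glue M xs t).Chain' A ∧ Alt (InM X M) (NotM A X M) (glue M xs t) ∧
      (glue M xs t).Nodup ∧ (glue M xs t).head? = xs.head? ∧
      ((t = [] → ∀ z, xs.getLast? = some z → (glue M xs t).getLast? = some (M z)) ∧
       (t ≠ [] → (glue M xs t).getLast? = t.getLast?)) := by
  intro xs
  induction xs with
  | nil => intro t h; exact absurd rfl h
  | cons x xs ih =>
    intro t _ hX hnd ht hch
    have hxX : x ∈ X := hX x (by simp)
    have hxY : M x ∈ Y := hMmem x hxX
    have hxMx : x ≠ M x := fun h => Finset.disjoint_left.mp hXY hxX (h ▸ hxY)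
    cases xs with
    | nil =>
      rcases ht with rfl | ⟨w, rfl, hwX⟩
      · refine ⟨?_, ?_, ?_, rfl, ?_, ?_⟩
        · exact List.isChain_pair.mpr (hMarc x hxX)
        · show Alt (InM X M) (NotM A X M) [x, M x]
          exact ⟨⟨hxX, rfl⟩, trivial⟩
        · simp [glue, hxMx]
        · intro _ z hz
          simp at hz; subst hz; rfl
        · intro h; exact absurd rfl h
      · -- glue [x] [w] = [x, M x, w]
        have harc : A (M x) w := by
          have := hch
          simp only [List.cons_append, List.nil_append] at this
          exact (List.isChain_cons_cons.mp this).1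
        have hwx : w ≠ x := by
          have : x ≠ w := by simpa using hnd
          exact this.symm
        have hwMx : w ≠ M x := fun h => Finset.disjoint_left.mp hXY hwX (h ▸ hxY)
        refine ⟨?_, ?_, ?_, rfl, ?_, ?_⟩
        · show List.Chain' A [x, M x, w]
          unfold List.Chain'; rw [List.isChain_cons_cons, List.isChain_pair]
          exact ⟨hMarc x hxX, harc⟩
        · show Alt (InM X M) (NotM A X M) [x, M x, w]
          refine ⟨⟨hxX, rfl⟩, ⟨harc, ?_⟩, trivial⟩
          intro hin
          exact Finset.disjoint_left.mp hXY hin.1 hxY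
        · show List.Nodup [x, M x, w]
          simp [hxMx, Ne.symm hwx, Ne.symm hwMx]
        · intro h; exact absurd h (by simp)
        · intro _; rfl
    | cons x' xs' =>
      have hX' : ∀ z ∈ x' :: xs', z ∈ X := fun z hz => hX z (List.mem_cons_of_mem _ hz)
      have hnd' : ((x' :: xs') ++ t).Nodup := (List.nodup_cons.mp hnd).2
      have hch' : ((x' :: xs') ++ t).Chain' (fun p q => A (M p) q) := by
        have := hch
        simp only [List.cons_append] at this ⊢
        exact (List.isChain_cons_cons.mp this).2
      obtain ⟨C, Al, ND, HD, LA1, LA2⟩ := ih t (by simp) hX' hnd' ht hch'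
      have hGx' : (glue M (x' :: xs') t).head? = some x' := by rw [HD]; rfl
      obtain ⟨G', hG'⟩ : ∃ G', glue M (x' :: xs') t = x' :: G' := ⟨_, rfl⟩
      have harcx' : A (M x) x' := by
        have := hch
        simp only [List.cons_append] at this
        exact (List.isChain_cons_cons.mp this).1
      have hxnotin : x ∉ glue M (x' :: xs') t := by
        intro hmem
        rcases mem_glue hmem with h | h | h
        · exact (List.nodup_cons.mp hnd).1 (List.mem_append_left _ h)
        · obtain ⟨x'', hx'', hx2⟩ := h
          exact Finset.disjoint_left.mp hXY hxX (hx2 ▸ hMmem x'' (hX' x'' hx''))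
        · exact (List.nodup_cons.mp hnd).1 (List.mem_append_right _ h)
      have hMxnotin : M x ∉ glue M (x' :: xs') t := by
        intro hmem
        rcases mem_glue hmem with h | h | h
        · exact Finset.disjoint_left.mp hXY (hX' _ h) hxY
        · obtain ⟨x'', hx'', hx2⟩ := h
          have : x = x'' := hMinj hxX (hX' x'' hx'') hx2
          subst this
          exact (List.nodup_cons.mp hnd).1 (List.mem_append_left _ hx'')
        · rcases ht with rfl | ⟨w, rfl, hwX⟩
          · exact absurd h List.not_mem_nil
          · simp at h
            exact Finset.disjoint_left.mp hXY (h ▸ hwX) hxY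
      refine ⟨?_, ?_, ?_, rfl, ?_, ?_⟩
      · show List.Chain' A (x :: M x :: glue M (x' :: xs') t)
        unfold List.Chain'; rw [List.isChain_cons_cons, List.isChain_cons]
        refine ⟨hMarc x hxX, ?_, C⟩
        intro z hz
        rw [hGx'] at hz
        simp at hz; subst hz; exact harcx'
      · show Alt (InM X M) (NotM A X M) (x :: M x :: glue M (x' :: xs') t)
        rw [hG']
        refine ⟨⟨hxX, rfl⟩, ⟨harcx', ?_⟩, ?_⟩
        · intro hin
          exact Finset.disjoint_left.mp hXY hin.1 hxY
        · rw [← hG']; exact Al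
      · show (x :: M x :: glue M (x' :: xs') t).Nodup
        rw [List.nodup_cons, List.nodup_cons]
        refine ⟨?_, hMxnotin, ND⟩
        simp only [List.mem_cons]
        push_neg
        exact ⟨hxMx, hxnotin⟩
      · intro htnil z hz
        have hz' : (x' :: xs').getLast? = some z := by
          rw [← hz]; exact (List.getLast?_cons_cons).symm
        have := LA1 htnil z hz'
        show (x :: M x :: glue M (x' :: xs') t).getLast? = some (M z)
        rw [List.getLast?_cons_cons, getLast?_cons_of_ne_nil (by rw [hG']; simp)]
        exact this
      · intro htne
        have := LA2 htne
        show (x :: M x :: glue M (x' :: xs') t).getLast? = t.getLast?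
        rw [List.getLast?_cons_cons, getLast?_cons_of_ne_nil (by rw [hG']; simp)]
        exact this

lemma chain_bind {A : V → V → Prop} :
    ∀ (l : List (V × V)) (c d : V),
      (∀ p ∈ l, A p.1 p.2) →
      l.Chain' (fun p q => A p.2 q.1) →
      (l = [] → A c d) →
      (∀ h, l.head? = some h → A c h.1) →
      (∀ e, l.getLast? = some e → A e.2 d) →
      (c :: (l.flatMap (fun p => [p.1, p.2]) ++ [d])).Chain' A := by
  intro l
  induction l with
  | nil =>
    intro c d _ _ h0 _ _
    simpa [List.Chain'] using List.isChain_pair.mpr (h0 rfl)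
  | cons p l ih =>
    intro c d harc hch h0 hhd htl
    have hcp : A c p.1 := hhd p rfl
    have hpp : A p.1 p.2 := harc p (by simp)
    have step := ih p.2 d (fun q hq => harc q (List.mem_cons_of_mem _ hq))
      hch.tail
      (by
        intro hl; subst hl
        exact htl p rfl)
      (by
        intro h hh
        have := (List.isChain_cons.mp hch).1
        exact this h hh)
      (by
        intro e he
        apply htl
        rw [getLast?_cons_of_ne_nil]
        · exact he
        · intro hl; rw [hl] at he; exact (Option.some_ne_none e he.symm).elim)
    show List.Chain' A (c :: (p.1 :: p.2 :: l.flatMap (fun p => [p.1, p.2])) ++ [d])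
    simp only [List.cons_append] at step ⊢
    unfold List.Chain'; rw [List.isChain_cons_cons, List.isChain_cons_cons]
    exact ⟨hcp, hpp, step⟩

lemma nodup_bind : ∀ (l : List (V × V)),
    (l.map Prod.fst ++ l.map Prod.snd).Nodup →
    (l.flatMap (fun p => [p.1, p.2])).Nodup := by
  intro l
  induction l with
  | nil => intro _; simp
  | cons p l ih =>
    intro h
    simp only [List.map_cons] at h
    obtain ⟨hA, hB, hD⟩ := List.nodup_append.mp h
    have memfm : ∀ z, z ∈ l.flatMap (fun p => [p.1, p.2]) →
        z ∈ l.map Prod.fst ∨ z ∈ l.map Prod.snd := by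
      intro z hz
      obtain ⟨q, hq, hzq⟩ := List.mem_flatMap.mp hz
      rcases List.mem_cons.mp hzq with h1 | h1
      · exact Or.inl (List.mem_map.mpr ⟨q, hq, h1.symm⟩)
      · simp at h1
        exact Or.inr (List.mem_map.mpr ⟨q, hq, h1.symm⟩)
    have h12 : p.1 ≠ p.2 := by
      intro hcon
      exact hD _ List.mem_cons_self _ List.mem_cons_self hcon
    have h1n : p.1 ∉ l.flatMap (fun p => [p.1, p.2]) := by
      intro hcon
      rcases memfm _ hcon with h1 | h1
      · exact (List.nodup_cons.mp hA).1 h1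
      · exact hD _ List.mem_cons_self _ (List.mem_cons_of_mem _ h1) rfl
    have h2n : p.2 ∉ l.flatMap (fun p => [p.1, p.2]) := by
      intro hcon
      rcases memfm _ hcon with h1 | h1
      · exact hD _ (List.mem_cons_of_mem _ h1) _ List.mem_cons_self rfl
      · exact (List.nodup_cons.mp hB).1 h1
    have hrec := ih (List.Nodup.append (List.nodup_cons.mp hA).2 (List.nodup_cons.mp hB).2
      (fun a ha hb => hD _ (List.mem_cons_of_mem _ ha) _ (List.mem_cons_of_mem _ hb) rfl))
    show (p.1 :: p.2 :: l.flatMap (fun p => [p.1, p.2])).Nodup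
    rw [List.nodup_cons, List.nodup_cons]
    refine ⟨?_, h2n, hrec⟩
    simp only [List.mem_cons]
    push_neg
    exact ⟨h12, h1n⟩

lemma mem_bind2 {l : List (V × V)} {z : V} (hz : z ∈ l.flatMap (fun p => [p.1, p.2])) :
    z ∈ l.map Prod.fst ∨ z ∈ l.map Prod.snd := by
  obtain ⟨q, hq, hzq⟩ := List.mem_flatMap.mp hz
  rcases List.mem_cons.mp hzq with h1 | h1
  · exact Or.inl (List.mem_map.mpr ⟨q, hq, h1.symm⟩)
  · simp at h1
    exact Or.inr (List.mem_map.mpr ⟨q, hq, h1.symm⟩)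

lemma length_bind2 : ∀ (l : List (V × V)),
    (l.flatMap (fun p => [p.1, p.2])).length = 2 * l.length := by
  intro l
  induction l with
  | nil => simp
  | cons p l ih =>
    show (p.1 :: p.2 :: l.flatMap (fun p => [p.1, p.2])).length = 2 * (l.length + 1)
    simp only [List.length_cons, ih]
    omega

lemma buildCycle {A : V → V → Prop} {X Y : Finset V} {a : ℕ} [DecidableEq V]
    (ha : 2 ≤ a)
    (hXcard : X.card = a) (hYcard : Y.card = a) (hdisj : Disjoint X Y)
    {y0 x0 : V} (hy0 : y0 ∈ Y) (hx0 : x0 ∈ X)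
    (h0 : A y0 x0)
    (h1 : ∀ y ∈ Y.erase y0, A x0 y)
    (h2 : ∀ y ∈ Y.erase y0, ∀ x ∈ X.erase x0, A y x ∧ A x y)
    (h3 : ∀ x ∈ X.erase x0, A x y0) :
    HasCycleOfLength A (2 * a) := by
  set ys := (Y.erase y0).toList with hys
  set xs := (X.erase x0).toList with hxs
  have hyl : ys.length = a - 1 := by
    rw [hys, Finset.length_toList, Finset.card_erase_of_mem hy0, hYcard]
  have hxl : xs.length = a - 1 := by
    rw [hxs, Finset.length_toList, Finset.card_erase_of_mem hx0, hXcard]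
  set l := ys.zip xs with hl
  have hll : l.length = a - 1 := by
    rw [hl, List.length_zip, hyl, hxl, Nat.min_self]
  have hlne : l ≠ [] := by
    intro h
    rw [h] at hll
    simp at hll
    omega
  have hmem : ∀ p ∈ l, p.1 ∈ Y.erase y0 ∧ p.2 ∈ X.erase x0 := by
    rintro ⟨py, px⟩ hp
    obtain ⟨hpy, hpx⟩ := List.of_mem_zip hp
    exact ⟨Finset.mem_toList.mp hpy, Finset.mem_toList.mp hpx⟩
  set L := l.flatMap (fun p => [p.1, p.2]) with hLdef
  have hmapf : l.map Prod.fst = ys := List.map_fst_zip (l₁ := ys) (l₂ := xs) (by omega)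
  have hmaps : l.map Prod.snd = xs := List.map_snd_zip (l₁ := ys) (l₂ := xs) (by omega)
  have hLmem : ∀ z ∈ L, z ∈ ys ∨ z ∈ xs := by
    intro z hz
    rcases mem_bind2 hz with h | h
    · exact Or.inl (hmapf ▸ h)
    · exact Or.inr (hmaps ▸ h)
  have hysY : ∀ z ∈ ys, z ∈ Y := fun z hz =>
    Finset.mem_of_mem_erase (Finset.mem_toList.mp hz)
  have hxsX : ∀ z ∈ xs, z ∈ X := fun z hz =>
    Finset.mem_of_mem_erase (Finset.mem_toList.mp hz)
  refine ⟨y0 :: x0 :: L, ⟨?_, ?_, y0, rfl, ?_⟩, ?_⟩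
  · simp
  · -- Nodup
    have hLnd : L.Nodup := by
      apply nodup_bind
      rw [hmapf, hmaps]
      refine List.Nodup.append (Finset.nodup_toList _) (Finset.nodup_toList _) ?_
      intro z hzy hzx
      exact Finset.disjoint_left.mp hdisj (hxsX z hzx) (hysY z hzy)
    have hy0L : y0 ∉ L := by
      intro h
      rcases hLmem _ h with h | h
      · exact (Finset.mem_erase.mp (Finset.mem_toList.mp h)).1 rfl
      · exact Finset.disjoint_left.mp hdisj (hxsX _ h) hy0
    have hx0L : x0 ∉ L := by
      intro h
      rcases hLmem _ h with h | h
      · exact Finset.disjoint_left.mp hdisj hx0 (hysY _ h)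
      · exact (Finset.mem_erase.mp (Finset.mem_toList.mp h)).1 rfl
    rw [List.nodup_cons, List.nodup_cons]
    refine ⟨?_, hx0L, hLnd⟩
    simp only [List.mem_cons]
    push_neg
    exact ⟨fun h => Finset.disjoint_left.mp hdisj (h ▸ hx0) hy0, hy0L⟩
  · -- Chain'
    have step := chain_bind (A := A) l x0 y0
      (fun p hp => (h2 p.1 (hmem p hp).1 p.2 (hmem p hp).2).1)
      (List.Pairwise.isChain (List.pairwise_of_forall_mem_list
        (fun p hp q hq => (h2 q.1 (hmem q hq).1 p.2 (hmem p hp).2).2)))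
      (fun h => absurd h hlne)
      (fun h hh => h1 h.1 (hmem h (List.mem_of_mem_head? hh)).1)
      (fun e he => h3 e.2 (hmem e (List.mem_of_mem_getLast? he)).2)
    show List.Chain' A ((y0 :: x0 :: L) ++ [y0])
    simp only [List.cons_append]
    unfold List.Chain'; rw [List.isChain_cons_cons]
    exact ⟨h0, step⟩
  · -- length
    show (y0 :: x0 :: L).length = 2 * a
    simp only [List.length_cons, hLdef, length_bind2, hll]
    omega

end Aux

/-- under condition (M), if `D` has a complete matching `M` from `X` to `Y`
and no oriented cycle of length `2a`, then any two distinct vertices are joined by an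
`M`-compatible oriented path. -/
theorem stmt4 {V : Type} [Fintype V] [DecidableEq V] (A : V → V → Prop)
    (X Y : Finset V) (a : ℕ) (ha : 2 ≤ a)
    (hbb : BalancedBipartite A X Y a) (hM : CondM A a)
    (M : V → V) (hmatch : CompleteMatching A X Y M)
    (hnoham : ¬ HasCycleOfLength A (2 * a)) :
    ∀ u v : V, u ≠ v → ∃ p : List V, IsCompatPathFromTo A X M p u v := by
  classical
  obtain ⟨hXcard, hYcard, hdisj, hcover, hbip⟩ := hbb
  obtain ⟨hM1, hMinj⟩ := hmatch
  have hMY : ∀ x ∈ X, M x ∈ Y := fun x hx => (hM1 x hx).1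
  have hMA : ∀ x ∈ X, A x (M x) := fun x hx => (hM1 x hx).2
  have hnXY : ∀ z, z ∈ X → z ∈ Y → False := fun z h1 h2 => Finset.disjoint_left.mp hdisj h1 h2
  have himg : X.image M = Y := by
    apply Finset.eq_of_subset_of_card_le
    · intro z hz
      obtain ⟨x, hx, rfl⟩ := Finset.mem_image.mp hz
      exact hMY x hx
    · rw [Finset.card_image_of_injOn hMinj, hXcard, hYcard]
  have hsurj : ∀ y ∈ Y, ∃ x, x ∈ X ∧ M x = y := by
    intro y hy
    rw [← himg] at hy
    obtain ⟨x, hx, hxy⟩ := Finset.mem_image.mp hy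
    exact ⟨x, hx, hxy⟩
  have hcardP : ∀ (P : V → Prop), Nat.card {w // P w} = (Finset.univ.filter P).card := by
    intro P
    rw [Nat.card_eq_fintype_card, Fintype.card_subtype]
  have hcard_le : ∀ (P : V → Prop) (s : Finset V), (∀ w, P w → w ∈ s) →
      Nat.card {w // P w} ≤ s.card := by
    intro P s h
    rw [hcardP]
    exact Finset.card_le_card (fun w hw => h w (Finset.mem_filter.mp hw).2)
  have hfull : ∀ (P : V → Prop) (s : Finset V), (∀ w, P w → w ∈ s) →
      s.card ≤ Nat.card {w // P w} → ∀ w ∈ s, P w := by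
    intro P s hsub hc w hw
    rw [hcardP] at hc
    have h1 : Finset.univ.filter P ⊆ s := fun z hz => hsub z (Finset.mem_filter.mp hz).2
    rw [← Finset.eq_of_subset_of_card_le h1 hc] at hw
    exact (Finset.mem_filter.mp hw).2
  have hexP : ∀ (P : V → Prop), 1 ≤ Nat.card {w // P w} → ∃ w, P w := by
    intro P h
    rw [hcardP] at h
    obtain ⟨w, hw⟩ := Finset.card_pos.mp h
    exact ⟨w, (Finset.mem_filter.mp hw).2⟩
  have harcXY : ∀ p q, A p q → p ∈ X → q ∈ Y := by
    intro p q h hp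
    rcases hbip p q h with ⟨_, h2⟩ | ⟨h1, _⟩
    · exact h2
    · exact (hnXY p hp h1).elim
  have harcYX : ∀ p q, A p q → p ∈ Y → q ∈ X := by
    intro p q h hp
    rcases hbip p q h with ⟨h1, _⟩ | ⟨_, h2⟩
    · exact (hnXY p h1 hp).elim
    · exact h2
  have harcInX : ∀ p q, A p q → q ∈ X → p ∈ Y := by
    intro p q h hq
    rcases hbip p q h with ⟨_, h2⟩ | ⟨h1, _⟩
    · exact (hnXY q hq h2).elim
    · exact h1
  have harcInY : ∀ p q, A p q → q ∈ Y → p ∈ X := by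
    intro p q h hq
    rcases hbip p q h with ⟨h1, _⟩ | ⟨_, h2⟩
    · exact h1
    · exact (hnXY q h2 hq).elim
  have hXnadj : ∀ p q, p ∈ X → q ∈ X → ¬ A p q := by
    intro p q hp hq h
    exact hnXY q hq (harcXY p q h hp)
  have hYnadj : ∀ p q, p ∈ Y → q ∈ Y → ¬ A p q := by
    intro p q hp hq h
    exact hnXY q (harcYX p q h hp) hq
  have hdeg : ∀ v, deg A v = outdeg A v + indeg A v := fun v => rfl
  have houtle : ∀ v, outdeg A v ≤ a := by
    intro v
    rcases hcover v with hv | hv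
    · have := hcard_le (fun w => A v w) Y (fun w hw => harcXY v w hw hv)
      rw [hYcard] at this; exact this
    · have := hcard_le (fun w => A v w) X (fun w hw => harcYX v w hw hv)
      rw [hXcard] at this; exact this
  have hinle : ∀ v, indeg A v ≤ a := by
    intro v
    rcases hcover v with hv | hv
    · have := hcard_le (fun w => A w v) Y (fun w hw => harcInX w v hw hv)
      rw [hYcard] at this; exact this
    · have := hcard_le (fun w => A w v) X (fun w hw => harcInY w v hw hv)
      rw [hXcard] at this; exact this
  have hdegle : ∀ v, deg A v ≤ 2 * a := by
    intro v
    rw [hdeg]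
    have := houtle v
    have := hinle v
    omega
  have hmind : ∀ v, a + 1 ≤ deg A v := by
    intro v
    rcases hcover v with hv | hv
    · obtain ⟨w, hwX, hwv⟩ := Finset.exists_mem_ne (by rw [hXcard]; omega) v
      have := hM v w (Ne.symm hwv) (hXnadj v w hv hwX) (hXnadj w v hwX hv)
      have := hdegle w
      omega
    · obtain ⟨w, hwY, hwv⟩ := Finset.exists_mem_ne (by rw [hYcard]; omega) v
      have := hM v w (Ne.symm hwv) (hYnadj v w hv hwY) (hYnadj w v hwY hv)
      have := hdegle w
      omega
  have houtpos : ∀ v, 1 ≤ outdeg A v := by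
    intro v
    have := hmind v
    rw [hdeg] at this
    have := hinle v
    omega
  have hinpos : ∀ v, 1 ≤ indeg A v := by
    intro v
    have := hmind v
    rw [hdeg] at this
    have := houtle v
    omega
  have hOutFullX : ∀ v, v ∈ X → a ≤ outdeg A v → ∀ y' ∈ Y, A v y' := by
    intro v hv hc
    exact hfull (fun w => A v w) Y (fun w hw => harcXY v w hw hv) (by rw [hYcard]; exact hc)
  have hInFullX : ∀ v, v ∈ X → a ≤ indeg A v → ∀ y' ∈ Y, A y' v := by
    intro v hv hc
    exact hfull (fun w => A w v) Y (fun w hw => harcInX w v hw hv) (by rw [hYcard]; exact hc)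
  have hOutFullY : ∀ v, v ∈ Y → a ≤ outdeg A v → ∀ x' ∈ X, A v x' := by
    intro v hv hc
    exact hfull (fun w => A v w) X (fun w hw => harcYX v w hw hv) (by rw [hXcard]; exact hc)
  have hInFullY : ∀ v, v ∈ Y → a ≤ indeg A v → ∀ x' ∈ X, A x' v := by
    intro v hv hc
    exact hfull (fun w => A w v) X (fun w hw => harcInY w v hw hv) (by rw [hXcard]; exact hc)
  -- LemY : a special Y vertex of degree ≤ a+1 dominated by all of X gives a 2a-cycle
  have LemY : ∀ y0 x0, y0 ∈ Y → x0 ∈ X → A y0 x0 → deg A y0 ≤ a + 1 →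
      (∀ x' ∈ X, A x' y0) → False := by
    intro y0 x0 hy0 hx0 h0 hdy hall
    have hcomp : ∀ y' ∈ Y.erase y0, (∀ x' ∈ X, A y' x') ∧ (∀ x' ∈ X, A x' y') := by
      intro y' hy'
      obtain ⟨hne, hy'Y⟩ := Finset.mem_erase.mp hy'
      have h1 := hM y' y0 hne (hYnadj y' y0 hy'Y hy0) (hYnadj y0 y' hy0 hy'Y)
      have h2 : 2 * a ≤ deg A y' := by omega
      rw [hdeg] at h2
      have := houtle y'
      have := hinle y'
      exact ⟨hOutFullY y' hy'Y (by omega), hInFullY y' hy'Y (by omega)⟩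
    exact hnoham (buildCycle ha hXcard hYcard hdisj hy0 hx0 h0
      (fun y hy => (hcomp y hy).2 x0 hx0)
      (fun y hy x hx => ⟨(hcomp y hy).1 x (Finset.mem_of_mem_erase hx),
        (hcomp y hy).2 x (Finset.mem_of_mem_erase hx)⟩)
      (fun x hx => hall x (Finset.mem_of_mem_erase hx)))
  have LemX : ∀ y0 x0, y0 ∈ Y → x0 ∈ X → A y0 x0 → deg A x0 ≤ a + 1 →
      (∀ y' ∈ Y, A x0 y') → False := by
    intro y0 x0 hy0 hx0 h0 hdx hall
    have hcomp : ∀ x' ∈ X.erase x0, (∀ y' ∈ Y, A x' y') ∧ (∀ y' ∈ Y, A y' x') := by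
      intro x' hx'
      obtain ⟨hne, hx'X⟩ := Finset.mem_erase.mp hx'
      have h1 := hM x' x0 hne (hXnadj x' x0 hx'X hx0) (hXnadj x0 x' hx0 hx'X)
      have h2 : 2 * a ≤ deg A x' := by omega
      rw [hdeg] at h2
      have := houtle x'
      have := hinle x'
      exact ⟨hOutFullX x' hx'X (by omega), hInFullX x' hx'X (by omega)⟩
    exact hnoham (buildCycle ha hXcard hYcard hdisj hy0 hx0 h0
      (fun y hy => hall y (Finset.mem_of_mem_erase hy))
      (fun y hy x hx => ⟨(hcomp x hx).2 y (Finset.mem_of_mem_erase hy),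
        (hcomp x hx).1 y (Finset.mem_of_mem_erase hy)⟩)
      (fun x hx => (hcomp x hx).1 y0 hy0))
  -- hL1 : the contracted digraph on X is "strongly connected"
  have hL1 : ∀ x', x' ∈ X → ∀ z, z ∈ X →
      Relation.ReflTransGen (fun c d => d ∈ X ∧ c ≠ d ∧ A (M c) d) x' z := by
    intro x hx
    by_contra hcon
    push_neg at hcon
    obtain ⟨z0, hz0X, hz0⟩ := hcon
    set R1 : V → V → Prop := fun c d => d ∈ X ∧ c ≠ d ∧ A (M c) d with hR1
    set SF := X.filter (fun w => Relation.ReflTransGen R1 x w) with hSFdef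
    set TF := X.filter (fun w => ¬ Relation.ReflTransGen R1 x w) with hTFdef
    have hsum : SF.card + TF.card = a := by
      rw [hSFdef, hTFdef, Finset.card_filter_add_card_filter_not, hXcard]
    have hxS : x ∈ SF := Finset.mem_filter.mpr ⟨hx, Relation.ReflTransGen.refl⟩
    have hz0T : z0 ∈ TF := Finset.mem_filter.mpr ⟨hz0X, hz0⟩
    have hsubS : ∀ s, s ∈ SF → ∀ w, A (M s) w → w ∈ SF := by
      intro s hs w hw
      obtain ⟨hsX, hsR⟩ := Finset.mem_filter.mp hs
      have hwX : w ∈ X := harcYX (M s) w hw (hMY s hsX)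
      by_cases hws : w = s
      · rw [hws]; exact hs
      · exact Finset.mem_filter.mpr ⟨hwX, hsR.tail ⟨hwX, fun h => hws h.symm, hw⟩⟩
    have hsubT : ∀ t, t ∈ TF → ∀ z, A z t → z ∈ TF.image M := by
      intro t ht z hz
      obtain ⟨htX, htn⟩ := Finset.mem_filter.mp ht
      have hzY : z ∈ Y := harcInX z t hz htX
      obtain ⟨s', hs'X, rfl⟩ := hsurj z hzY
      by_cases hrt : Relation.ReflTransGen R1 x s'
      · exfalso
        have hts' : s' ≠ t := by
          intro h
          exact htn (h ▸ hrt)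
        exact htn (hrt.tail ⟨htX, hts', hz⟩)
      · exact Finset.mem_image_of_mem M (Finset.mem_filter.mpr ⟨hs'X, hrt⟩)
    have houtS : ∀ s, s ∈ SF → outdeg A (M s) ≤ SF.card := by
      intro s hs
      exact hcard_le (fun w => A (M s) w) SF (hsubS s hs)
    have hinT : ∀ t, t ∈ TF → indeg A t ≤ TF.card := by
      intro t ht
      calc indeg A t ≤ (TF.image M).card := hcard_le (fun w => A w t) (TF.image M) (hsubT t ht)
        _ ≤ TF.card := Finset.card_image_le
    by_cases hS1 : SF.card = 1
    · -- SF = {x}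
      have hSx : SF = {x} := by
        obtain ⟨b, hb⟩ := Finset.card_eq_one.mp hS1
        rw [hb]
        rw [hb] at hxS
        rw [Finset.mem_singleton] at hxS
        rw [hxS]
      have hout1 : outdeg A (M x) ≤ 1 := by
        have := houtS x hxS
        rw [hS1] at this; exact this
      have hdMx : deg A (M x) ≤ a + 1 := by
        rw [hdeg]
        have := hinle (M x)
        omega
      have hMxY : M x ∈ Y := hMY x hx
      have hinfull : ∀ x'' ∈ X, A x'' (M x) := by
        apply hInFullY (M x) hMxY
        have := hmind (M x)
        rw [hdeg] at this
        omega
      obtain ⟨w, hw⟩ := hexP (fun w => A (M x) w) (houtpos (M x))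
      have hwx : w = x := by
        have := hsubS x hxS w hw
        rw [hSx, Finset.mem_singleton] at this
        exact this
      exact LemY (M x) x hMxY hx (hwx ▸ hw) hdMx hinfull
    · by_cases hT1 : TF.card = 1
      · -- TF = {t}
        obtain ⟨t, hTt⟩ := Finset.card_eq_one.mp hT1
        have htT : t ∈ TF := by rw [hTt]; exact Finset.mem_singleton_self t
        have htX : t ∈ X := (Finset.mem_filter.mp htT).1
        have hin1 : indeg A t ≤ 1 := by
          have := hinT t htT
          rw [hT1] at this; exact this
        have hdt : deg A t ≤ a + 1 := by
          rw [hdeg]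
          have := houtle t
          omega
        have houtfull : ∀ y' ∈ Y, A t y' := by
          apply hOutFullX t htX
          have := hmind t
          rw [hdeg] at this
          omega
        obtain ⟨z, hz⟩ := hexP (fun w => A w t) (hinpos t)
        have hzMt : z = M t := by
          have := hsubT t htT z hz
          rw [hTt, Finset.image_singleton, Finset.mem_singleton] at this
          exact this
        exact LemX (M t) t (hMY t htX) htX (hzMt ▸ hz) hdt houtfull
      · -- both SF and TF have ≥ 2 elements
        have hS2 : 2 ≤ SF.card := by
          have : 0 < SF.card := Finset.card_pos.mpr ⟨x, hxS⟩
          omega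
        have hT2 : 2 ≤ TF.card := by
          have : 0 < TF.card := Finset.card_pos.mpr ⟨z0, hz0T⟩
          omega
        obtain ⟨s1, hs1, s2, hs2, hs12⟩ := Finset.one_lt_card.mp (by omega : 1 < SF.card)
        obtain ⟨t1, ht1, t2, ht2, ht12⟩ := Finset.one_lt_card.mp (by omega : 1 < TF.card)
        have hs1X : s1 ∈ X := (Finset.mem_filter.mp hs1).1
        have hs2X : s2 ∈ X := (Finset.mem_filter.mp hs2).1
        have ht1X : t1 ∈ X := (Finset.mem_filter.mp ht1).1
        have ht2X : t2 ∈ X := (Finset.mem_filter.mp ht2).1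
        have hMs1Y : M s1 ∈ Y := hMY s1 hs1X
        have hMs2Y : M s2 ∈ Y := hMY s2 hs2X
        have hMne : M s1 ≠ M s2 := fun h => hs12 (hMinj hs1X hs2X h)
        have e1 := hM (M s1) (M s2) hMne (hYnadj _ _ hMs1Y hMs2Y) (hYnadj _ _ hMs2Y hMs1Y)
        have e2 := hM t1 t2 ht12 (hXnadj _ _ ht1X ht2X) (hXnadj _ _ ht2X ht1X)
        rw [hdeg, hdeg] at e1 e2
        have b1 := houtS s1 hs1
        have b2 := houtS s2 hs2
        have b3 := hinT t1 ht1
        have b4 := hinT t2 ht2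
        have c1 := hinle (M s1)
        have c2 := hinle (M s2)
        have c3 := houtle t1
        have c4 := houtle t2
        omega
  -- hL2 : avoiding the preimage of y, everything else in X is reachable from a
  -- non-trivial out-neighbour of y
  have hL2 : ∀ y xy, y ∈ Y → xy ∈ X → M xy = y → ∀ z, z ∈ X → z ≠ xy →
      ∃ x1, A y x1 ∧ x1 ≠ xy ∧
        Relation.ReflTransGen (fun c d => d ∈ X ∧ d ≠ xy ∧ c ≠ d ∧ A (M c) d) x1 z := by
    intro y xy hyY hxyX hxyM
    set R2 : V → V → Prop := fun c d => d ∈ X ∧ d ≠ xy ∧ c ≠ d ∧ A (M c) d with hR2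
    -- first, y has an out-neighbour different from xy
    have hS0 : ∃ x1, A y x1 ∧ x1 ≠ xy := by
      by_contra hcon
      push_neg at hcon
      have hsubY : ∀ w, A y w → w ∈ ({xy} : Finset V) := by
        intro w hw
        rw [Finset.mem_singleton]
        exact hcon w hw
      have houty : outdeg A y ≤ 1 := by
        have := hcard_le (fun w => A y w) {xy} hsubY
        rw [Finset.card_singleton] at this
        exact this
      have hdy : deg A y ≤ a + 1 := by
        rw [hdeg]
        have := hinle y
        omega
      have hinfull : ∀ x'' ∈ X, A x'' y := by
        apply hInFullY y hyY
        have := hmind y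
        rw [hdeg] at this
        omega
      obtain ⟨w, hw⟩ := hexP (fun w => A y w) (houtpos y)
      exact LemY y xy hyY hxyX ((hcon w hw) ▸ hw) hdy hinfull
    by_contra hcon
    push_neg at hcon
    obtain ⟨z0, hz0X, hz0xy, hz0⟩ := hcon
    have hz0' : ∀ x1, A y x1 → x1 ≠ xy → ¬ Relation.ReflTransGen R2 x1 z0 := by
      intro x1 h1 h2 h3
      exact (hz0 x1 h1 h2) h3
    set P2 : V → Prop := fun w => ∃ x1, A y x1 ∧ x1 ≠ xy ∧ Relation.ReflTransGen R2 x1 w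
      with hP2
    set SF := (X.erase xy).filter P2 with hSFdef
    set TF := (X.erase xy).filter (fun w => ¬ P2 w) with hTFdef
    have hsum : SF.card + TF.card = a - 1 := by
      rw [hSFdef, hTFdef, Finset.card_filter_add_card_filter_not,
        Finset.card_erase_of_mem hxyX, hXcard]
    obtain ⟨xs0, hxs0A, hxs0ne⟩ := hS0
    have hxs0X : xs0 ∈ X := harcYX y xs0 hxs0A hyY
    have hxs0S : xs0 ∈ SF := Finset.mem_filter.mpr ⟨Finset.mem_erase.mpr ⟨hxs0ne, hxs0X⟩,
      ⟨xs0, hxs0A, hxs0ne, Relation.ReflTransGen.refl⟩⟩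
    have hz0T : z0 ∈ TF := Finset.mem_filter.mpr ⟨Finset.mem_erase.mpr ⟨hz0xy, hz0X⟩,
      fun hp => by
        obtain ⟨x1, h1, h2, h3⟩ := hp
        exact hz0' x1 h1 h2 h3⟩
    have hsubS : ∀ s, s ∈ SF → ∀ w, A (M s) w → w ∈ insert xy SF := by
      intro s hs w hw
      obtain ⟨hsE, hsP⟩ := Finset.mem_filter.mp hs
      have hsX : s ∈ X := Finset.mem_of_mem_erase hsE
      have hwX : w ∈ X := harcYX (M s) w hw (hMY s hsX)
      by_cases hwxy : w = xy
      · rw [hwxy]; exact Finset.mem_insert_self _ _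
      · apply Finset.mem_insert_of_mem
        by_cases hws : w = s
        · rw [hws]; exact hs
        · obtain ⟨x1, h1, h2, h3⟩ := hsP
          exact Finset.mem_filter.mpr ⟨Finset.mem_erase.mpr ⟨hwxy, hwX⟩,
            ⟨x1, h1, h2, h3.tail ⟨hwX, hwxy, fun h => hws h.symm, hw⟩⟩⟩
    have hsuby : ∀ w, A y w → w ∈ insert xy SF := by
      intro w hw
      have hwX : w ∈ X := harcYX y w hw hyY
      by_cases hwxy : w = xy
      · rw [hwxy]; exact Finset.mem_insert_self _ _
      · exact Finset.mem_insert_of_mem (Finset.mem_filter.mpr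
          ⟨Finset.mem_erase.mpr ⟨hwxy, hwX⟩, ⟨w, hw, hwxy, Relation.ReflTransGen.refl⟩⟩)
    have hsubT : ∀ t, t ∈ TF → ∀ z, A z t → z ∈ TF.image M := by
      intro t ht z hz
      obtain ⟨htE, htn⟩ := Finset.mem_filter.mp ht
      obtain ⟨htxy, htX⟩ := Finset.mem_erase.mp htE
      have hzY : z ∈ Y := harcInX z t hz htX
      obtain ⟨s', hs'X, rfl⟩ := hsurj z hzY
      by_cases hs'xy : s' = xy
      · exfalso
        apply htn
        rw [hs'xy, hxyM] at hz
        exact ⟨t, hz, htxy, Relation.ReflTransGen.refl⟩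
      · by_cases hs'P : P2 s'
        · exfalso
          apply htn
          obtain ⟨x1, h1, h2, h3⟩ := hs'P
          have hs't : s' ≠ t := by
            intro h
            exact htn (h ▸ ⟨x1, h1, h2, h3⟩)
          exact ⟨x1, h1, h2, h3.tail ⟨htX, htxy, hs't, hz⟩⟩
        · exact Finset.mem_image_of_mem M (Finset.mem_filter.mpr
            ⟨Finset.mem_erase.mpr ⟨hs'xy, hs'X⟩, hs'P⟩)
    have houtS : ∀ s, s ∈ SF → outdeg A (M s) ≤ SF.card + 1 := by
      intro s hs
      calc outdeg A (M s) ≤ (insert xy SF).card :=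
            hcard_le (fun w => A (M s) w) _ (hsubS s hs)
        _ ≤ SF.card + 1 := Finset.card_insert_le _ _
    have houty : outdeg A y ≤ SF.card + 1 := by
      calc outdeg A y ≤ (insert xy SF).card := hcard_le (fun w => A y w) _ hsuby
        _ ≤ SF.card + 1 := Finset.card_insert_le _ _
    have hinT : ∀ t, t ∈ TF → indeg A t ≤ TF.card := by
      intro t ht
      calc indeg A t ≤ (TF.image M).card := hcard_le (fun w => A w t) _ (hsubT t ht)
        _ ≤ TF.card := Finset.card_image_le
    by_cases hT1 : TF.card = 1
    · -- TF = {t}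
      obtain ⟨t, hTt⟩ := Finset.card_eq_one.mp hT1
      have htT : t ∈ TF := by rw [hTt]; exact Finset.mem_singleton_self t
      have htX : t ∈ X := Finset.mem_of_mem_erase (Finset.mem_filter.mp htT).1
      have hin1 : indeg A t ≤ 1 := by
        have := hinT t htT
        rw [hT1] at this; exact this
      have hdt : deg A t ≤ a + 1 := by
        rw [hdeg]
        have := houtle t
        omega
      have houtfull : ∀ y' ∈ Y, A t y' := by
        apply hOutFullX t htX
        have := hmind t
        rw [hdeg] at this
        omega
      obtain ⟨z, hz⟩ := hexP (fun w => A w t) (hinpos t)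
      have hzMt : z = M t := by
        have := hsubT t htT z hz
        rw [hTt, Finset.image_singleton, Finset.mem_singleton] at this
        exact this
      exact LemX (M t) t (hMY t htX) htX (hzMt ▸ hz) hdt houtfull
    · -- |TF| ≥ 2 : contradiction by counting
      have hT2 : 2 ≤ TF.card := by
        have : 0 < TF.card := Finset.card_pos.mpr ⟨z0, hz0T⟩
        omega
      obtain ⟨t1, ht1, t2, ht2, ht12⟩ := Finset.one_lt_card.mp (by omega : 1 < TF.card)
      have ht1X : t1 ∈ X := Finset.mem_of_mem_erase (Finset.mem_filter.mp ht1).1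
      have ht2X : t2 ∈ X := Finset.mem_of_mem_erase (Finset.mem_filter.mp ht2).1
      have hxs0E : xs0 ∈ X.erase xy := (Finset.mem_filter.mp hxs0S).1
      have hMs0Y : M xs0 ∈ Y := hMY xs0 hxs0X
      have hMs0y : M xs0 ≠ y := by
        intro h
        rw [← hxyM] at h
        exact hxs0ne (hMinj hxs0X hxyX h)
      have e1 := hM (M xs0) y hMs0y (hYnadj _ _ hMs0Y hyY) (hYnadj _ _ hyY hMs0Y)
      have e2 := hM t1 t2 ht12 (hXnadj _ _ ht1X ht2X) (hXnadj _ _ ht2X ht1X)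
      rw [hdeg, hdeg] at e1 e2
      have b1 := houtS xs0 hxs0S
      have b3 := hinT t1 ht1
      have b4 := hinT t2 ht2
      have c1 := hinle (M xs0)
      have c2 := hinle y
      have c3 := houtle t1
      have c4 := houtle t2
      have := houty
      omega
  -- path construction machinery, specialised
  have mkpath := glue_spec (A := A) hdisj hMY hMA hMinj
  -- final assembly
  intro u v huv
  rcases hcover u with huX | huY
  · -- u ∈ X
    rcases hcover v with hvX | hvY
    · -- v ∈ X
      obtain ⟨p, hc, hnd, hh, hl, hm⟩ := exists_nodup_chain_of_rtg (hL1 u huX v hvX)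
      have hpne : p ≠ [] := fun h => by simp [h] at hh
      have hpX : ∀ z ∈ p, z ∈ X := fun z hz =>
        rtg_prop (fun _ _ h => h.1) huX (hm z hz)
      have hlast : p.getLast hpne = v := by
        have h2 := List.getLast?_eq_getLast hpne
        rw [h2] at hl
        exact Option.some_injective _ hl
      have hdecomp : p.dropLast ++ [v] = p := by
        rw [← hlast]
        exact List.dropLast_append_getLast hpne
      have hdne : p.dropLast ≠ [] := by
        intro h
        have hpv : p = [v] := by rw [← hdecomp, h]; rfl
        rw [hpv] at hh
        simp at hh
        exact huv hh.symm
      have hdhead : p.dropLast.head? = some u := by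
        rw [← List.head?_append_of_ne_nil p.dropLast (l₂ := [v]) hdne, hdecomp]
        exact hh
      obtain ⟨C, Al, ND, HD, _, LA2⟩ := mkpath p.dropLast [v] hdne
        (fun z hz => hpX z ((List.dropLast_sublist p).subset hz))
        (by rw [hdecomp]; exact hnd)
        (Or.inr ⟨v, rfl, hvX⟩)
        (by rw [hdecomp]; exact hc.imp (fun c d h => h.2.2))
      have HDu : (glue M p.dropLast [v]).head? = some u := by rw [HD]; exact hdhead
      refine ⟨glue M p.dropLast [v], ⟨?_, ND, C, Or.inl Al⟩, HDu, ?_⟩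
      · intro h; rw [h] at HDu; simp at HDu
      · rw [LA2 (by simp)]; rfl
    · -- v ∈ Y
      obtain ⟨s, hsX, hsv⟩ := hsurj v hvY
      obtain ⟨p, hc, hnd, hh, hl, hm⟩ := exists_nodup_chain_of_rtg (hL1 u huX s hsX)
      have hpne : p ≠ [] := fun h => by simp [h] at hh
      have hpX : ∀ z ∈ p, z ∈ X := fun z hz =>
        rtg_prop (fun _ _ h => h.1) huX (hm z hz)
      obtain ⟨C, Al, ND, HD, LA1, _⟩ := mkpath p [] hpne hpX
        (by simpa using hnd) (Or.inl rfl)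
        (by simp only [List.append_nil]; exact hc.imp (fun c d h => h.2.2))
      have HDu : (glue M p []).head? = some u := by rw [HD]; exact hh
      refine ⟨glue M p [], ⟨?_, ND, C, Or.inl Al⟩, HDu, ?_⟩
      · intro h; rw [h] at HDu; simp at HDu
      · rw [LA1 rfl s hl, hsv]
  · -- u ∈ Y
    obtain ⟨xy, hxyX, hxyM⟩ := hsurj u huY
    have twoPath : ∀ w, w ∈ X → A u w → ∃ p, IsCompatPathFromTo A X M p u w := by
      intro w hwX harc
      refine ⟨[u, w], ⟨by simp, ?_, List.isChain_pair.mpr harc, Or.inr ?_⟩, rfl, rfl⟩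
      · simp only [List.nodup_cons, List.mem_singleton, List.not_mem_nil, not_false_iff,
          List.nodup_nil, and_true]
        exact fun h => hnXY w hwX (h ▸ huY)
      · show NotM A X M u w ∧ Alt (InM X M) (NotM A X M) [w]
        exact ⟨⟨harc, fun hin => hnXY u hin.1 huY⟩, trivial⟩
    have prep : ∀ (g : List V) (x1 w : V), A u x1 → g.head? = some x1 →
        g.getLast? = some w → g.Chain' A → Alt (InM X M) (NotM A X M) g →
        g.Nodup → u ∉ g → ∃ q, IsCompatPathFromTo A X M q u w := by
      intro g x1 w harc hhd hlastg hch halt hnd hnotin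
      obtain ⟨g', rfl⟩ : ∃ g', g = x1 :: g' := by
        cases g with
        | nil => simp at hhd
        | cons b t =>
          simp only [List.head?_cons, Option.some.injEq] at hhd
          exact ⟨t, by rw [hhd]⟩
      refine ⟨u :: x1 :: g', ⟨by simp, ?_, ?_, Or.inr ?_⟩, rfl, ?_⟩
      · exact List.nodup_cons.mpr ⟨hnotin, hnd⟩
      · unfold List.Chain'; rw [List.isChain_cons_cons]; exact ⟨harc, hch⟩
      · exact ⟨⟨harc, fun hin => hnXY u hin.1 huY⟩, halt⟩
      · rw [List.getLast?_cons_cons]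
        exact hlastg
    rcases hcover v with hvX | hvY
    · -- v ∈ X
      by_cases hvxy : v = xy
      · -- v is the M-preimage of u
        by_cases hAuv : A u v
        · exact twoPath v hvX hAuv
        · obtain ⟨z, hz⟩ := hexP (fun w => A w v) (hinpos v)
          have hzY : z ∈ Y := harcInX z v hz hvX
          obtain ⟨s2, hs2X, rfl⟩ := hsurj z hzY
          have hs2ne : s2 ≠ xy := by
            intro h
            rw [h, hxyM] at hz
            exact hAuv hz
          obtain ⟨x1, harcx1, hx1ne, hrt⟩ := hL2 u xy huY hxyX hxyM s2 hs2X hs2ne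
          obtain ⟨p, hc, hnd, hh, hl, hm⟩ := exists_nodup_chain_of_rtg hrt
          have hpne : p ≠ [] := fun h => by simp [h] at hh
          have hx1X : x1 ∈ X := harcYX u x1 harcx1 huY
          have hpP : ∀ z' ∈ p, z' ∈ X ∧ z' ≠ xy := fun z' hz' =>
            rtg_prop (P := fun w => w ∈ X ∧ w ≠ xy) (fun _ _ h => ⟨h.1, h.2.1⟩) ⟨hx1X, hx1ne⟩ (hm z' hz')
          have hvnotp : v ∉ p := by
            intro h
            exact (hpP v h).2 hvxy
          have hchain2 : (p ++ [v]).Chain' (fun c d => A (M c) d) := by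
            apply chain'_append_singleton (hc.imp (fun c d h => h.2.2.2)) hl
            exact hz
          obtain ⟨C, Al, ND, HD, _, LA2⟩ := mkpath p [v] hpne
            (fun z' hz' => (hpP z' hz').1)
            (List.Nodup.append hnd (List.nodup_singleton v)
              (fun z' hz' hzv => hvnotp (by
                have hzv' : z' = v := by simpa using hzv
                exact hzv' ▸ hz')))
            (Or.inr ⟨v, rfl, hvX⟩) hchain2
          have hunotin : u ∉ glue M p [v] := by
            intro hmem
            rcases mem_glue hmem with h | h | h
            · exact hnXY u (hpP u h).1 huY
            · obtain ⟨x'', hx'', h2⟩ := h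
              have : x'' = xy := hMinj (hpP x'' hx'').1 hxyX (by rw [← h2, hxyM])
              exact (hpP x'' hx'').2 this
            · simp at h
              exact hnXY v hvX (h ▸ huY)
          refine prep (glue M p [v]) x1 v harcx1 (by rw [HD]; exact hh) ?_ C Al ND hunotin
          rw [LA2 (by simp)]; rfl
      · -- generic v ∈ X
        obtain ⟨x1, harcx1, hx1ne, hrt⟩ := hL2 u xy huY hxyX hxyM v hvX hvxy
        obtain ⟨p, hc, hnd, hh, hl, hm⟩ := exists_nodup_chain_of_rtg hrt
        have hpne : p ≠ [] := fun h => by simp [h] at hh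
        have hx1X : x1 ∈ X := harcYX u x1 harcx1 huY
        have hpP : ∀ z' ∈ p, z' ∈ X ∧ z' ≠ xy := fun z' hz' =>
          rtg_prop (P := fun w => w ∈ X ∧ w ≠ xy) (fun _ _ h => ⟨h.1, h.2.1⟩) ⟨hx1X, hx1ne⟩ (hm z' hz')
        have hlast : p.getLast hpne = v := by
          have h2 := List.getLast?_eq_getLast hpne
          rw [h2] at hl
          exact Option.some_injective _ hl
        have hdecomp : p.dropLast ++ [v] = p := by
          rw [← hlast]
          exact List.dropLast_append_getLast hpne
        by_cases hdne : p.dropLast = []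
        · -- p = [v], so x1 = v
          have hpv : p = [v] := by rw [← hdecomp, hdne]; rfl
          rw [hpv] at hh
          simp only [List.head?_cons, Option.some.injEq] at hh
          exact twoPath v hvX (hh ▸ harcx1)
        · have hdhead : p.dropLast.head? = some x1 := by
            rw [← List.head?_append_of_ne_nil p.dropLast (l₂ := [v]) hdne, hdecomp]
            exact hh
          obtain ⟨C, Al, ND, HD, _, LA2⟩ := mkpath p.dropLast [v] hdne
            (fun z hz => (hpP z ((List.dropLast_sublist p).subset hz)).1)
            (by rw [hdecomp]; exact hnd)
            (Or.inr ⟨v, rfl, hvX⟩)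
            (by rw [hdecomp]; exact hc.imp (fun c d h => h.2.2.2))
          have hunotin : u ∉ glue M p.dropLast [v] := by
            intro hmem
            rcases mem_glue hmem with h | h | h
            · exact hnXY u (hpP u ((List.dropLast_sublist p).subset h)).1 huY
            · obtain ⟨x'', hx'', h2⟩ := h
              have hx''p := (List.dropLast_sublist p).subset hx''
              have : x'' = xy := hMinj (hpP x'' hx''p).1 hxyX (by rw [← h2, hxyM])
              exact (hpP x'' hx''p).2 this
            · simp at h
              exact hnXY v hvX (h ▸ huY)
          refine prep (glue M p.dropLast [v]) x1 v harcx1 (by rw [HD]; exact hdhead) ?_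
            C Al ND hunotin
          rw [LA2 (by simp)]; rfl
    · -- v ∈ Y
      obtain ⟨s, hsX, hsv⟩ := hsurj v hvY
      have hsne : s ≠ xy := by
        intro h
        rw [h, hxyM] at hsv
        exact huv hsv
      obtain ⟨x1, harcx1, hx1ne, hrt⟩ := hL2 u xy huY hxyX hxyM s hsX hsne
      obtain ⟨p, hc, hnd, hh, hl, hm⟩ := exists_nodup_chain_of_rtg hrt
      have hpne : p ≠ [] := fun h => by simp [h] at hh
      have hx1X : x1 ∈ X := harcYX u x1 harcx1 huY
      have hpP : ∀ z' ∈ p, z' ∈ X ∧ z' ≠ xy := fun z' hz' =>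
        rtg_prop (P := fun w => w ∈ X ∧ w ≠ xy) (fun _ _ h => ⟨h.1, h.2.1⟩) ⟨hx1X, hx1ne⟩ (hm z' hz')
      obtain ⟨C, Al, ND, HD, LA1, _⟩ := mkpath p [] hpne (fun z hz => (hpP z hz).1)
        (by simpa using hnd) (Or.inl rfl)
        (by simp only [List.append_nil]; exact hc.imp (fun c d h => h.2.2.2))
      have hunotin : u ∉ glue M p [] := by
        intro hmem
        rcases mem_glue hmem with h | h | h
        · exact hnXY u (hpP u h).1 huY
        · obtain ⟨x'', hx'', h2⟩ := h
          have : x'' = xy := hMinj (hpP x'' hx'').1 hxyX (by rw [← h2, hxyM])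
          exact (hpP x'' hx'').2 this
        · simp at h
      refine prep (glue M p []) x1 v harcx1 (by rw [HD]; exact hh) ?_ C Al ND hunotin
      rw [LA1 rfl s hl, hsv]

end BipDigraph
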